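/- Let γ > 0, θ ∈ [−1, 1], and s₁, s₂ ≥ 0. Then ∫₀^∞ e^{−w s₁} e^{−w s₂} {1 + θ (1 − e^{−w s₁})(1 − e^{−w s₂})} f_γ(w) dw = (1+θ){1 + γ(s₁+s₂)}^{−1/γ} − θ{1 + γ(2s₁+s₂)}^{−1/γ} − θ{1 + γ(s₁+2s₂)}^{−1/γ} + θ{1 + 2γ(s₁+s₂)}^{−1/γ}. Equivalently, the frailty-averaged FGM-copula survival term ∫₀^∞ C_θ(exp(−w s₁), exp(−w s₂)) f_γ(w) dw admits this four-term closed form. -/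

import Mathlib

open MeasureTheory Real

/-- The gamma frailty density with shape `1/γ` and scale `γ`. -/
noncomputable def gammaFrailtyDensity (γ w : ℝ) : ℝ :=
  w ^ (1 / γ - 1) * Real.exp (-w / γ) / (Real.Gamma (1 / γ) * γ ^ (1 / γ))

lemma aux_integrable {γ : ℝ} (hγ : 0 < γ) {s : ℝ} (hs : 0 ≤ s) :
    IntegrableOn (fun w => Real.exp (-(w * s)) * gammaFrailtyDensity γ w) (Set.Ioi 0) := by
  have ha : (0:ℝ) < 1 / γ := by positivity
  have hr : (0:ℝ) < s + 1 / γ := by positivity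
  have hbase : IntegrableOn (fun w : ℝ => w ^ (1 / γ - 1) * Real.exp (-((s + 1 / γ) * w)))
      (Set.Ioi 0) := by
    have := integrableOn_rpow_mul_exp_neg_mul_rpow (p := 1) (s := 1 / γ - 1) (b := s + 1/γ)
      (by linarith) one_pos hr
    refine this.congr_fun (fun w hw => ?_) measurableSet_Ioi
    dsimp only; rw [Real.rpow_one, neg_mul]
  have : IntegrableOn (fun w : ℝ =>
      (w ^ (1 / γ - 1) * Real.exp (-((s + 1 / γ) * w))) / (Real.Gamma (1 / γ) * γ ^ (1 / γ)))
      (Set.Ioi 0) := hbase.div_const _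
  refine this.congr_fun (fun w hw => ?_) measurableSet_Ioi
  unfold gammaFrailtyDensity
  have he : Real.exp (-((s + 1/γ) * w)) = Real.exp (-(w * s)) * Real.exp (-w / γ) := by
    rw [← Real.exp_add]; congr 1; field_simp; ring
  dsimp only; rw [he]; ring

lemma aux_laplace {γ : ℝ} (hγ : 0 < γ) {s : ℝ} (hs : 0 ≤ s) :
    ∫ w in Set.Ioi (0:ℝ), Real.exp (-(w * s)) * gammaFrailtyDensity γ w
      = (1 + γ * s) ^ (-1 / γ) := by
  have ha : (0:ℝ) < 1 / γ := by positivity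
  have hr : (0:ℝ) < s + 1 / γ := by positivity
  have hc : (0:ℝ) < Real.Gamma (1 / γ) * γ ^ (1 / γ) := by positivity
  have key : ∫ w in Set.Ioi (0:ℝ), Real.exp (-(w * s)) * gammaFrailtyDensity γ w
      = (∫ w in Set.Ioi (0:ℝ), w ^ (1 / γ - 1) * Real.exp (-((s + 1 / γ) * w)))
          / (Real.Gamma (1 / γ) * γ ^ (1 / γ)) := by
    rw [← integral_div]
    refine setIntegral_congr_fun measurableSet_Ioi (fun w hw => ?_)
    unfold gammaFrailtyDensity
    have he : Real.exp (-((s + 1/γ) * w)) = Real.exp (-(w * s)) * Real.exp (-w / γ) := by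
      rw [← Real.exp_add]; congr 1; field_simp; ring
    rw [he]; ring
  rw [key, integral_rpow_mul_exp_neg_mul_Ioi ha hr]
  have h1 : (1:ℝ) + γ * s = γ * (s + 1/γ) := by field_simp; ring
  rw [h1, Real.mul_rpow hγ.le hr.le, neg_div, Real.rpow_neg hγ.le, Real.rpow_neg hr.le,
    one_div, Real.inv_rpow hr.le]
  have h2 : (0:ℝ) < (s + 1/γ) ^ (1/γ) := Real.rpow_pos_of_pos hr _
  have h3 : (0:ℝ) < γ ^ ((1:ℝ)/γ) := Real.rpow_pos_of_pos hγ _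
  have h4 : (0:ℝ) < Real.Gamma (1/γ) := Real.Gamma_pos_of_pos ha
  field_simp

/-- Closed form for the frailty-averaged FGM-copula survival term: for `γ > 0`,
`θ ∈ [-1,1]` and `s₁, s₂ ≥ 0`,
`∫₀^∞ C_θ(e^{-w s₁}, e^{-w s₂}) f_γ(w) dw` equals the displayed four-term expression,
where `C_θ(u,v) = uv{1 + θ(1-u)(1-v)}` is the FGM copula. -/
theorem fgm_frailty_closed_form (γ θ : ℝ) (hγ : 0 < γ) (hθ : θ ∈ Set.Icc (-1 : ℝ) 1)
    (s₁ s₂ : ℝ) (hs₁ : 0 ≤ s₁) (hs₂ : 0 ≤ s₂) :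
    ∫ w in Set.Ioi (0 : ℝ),
        (Real.exp (-(w * s₁)) * Real.exp (-(w * s₂)) *
          (1 + θ * (1 - Real.exp (-(w * s₁))) * (1 - Real.exp (-(w * s₂))))) *
          gammaFrailtyDensity γ w
      = (1 + θ) * (1 + γ * (s₁ + s₂)) ^ (-1 / γ)
        - θ * (1 + γ * (2 * s₁ + s₂)) ^ (-1 / γ)
        - θ * (1 + γ * (s₁ + 2 * s₂)) ^ (-1 / γ)
        + θ * (1 + 2 * γ * (s₁ + s₂)) ^ (-1 / γ) := by
  have key : ∫ w in Set.Ioi (0 : ℝ),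
        (Real.exp (-(w * s₁)) * Real.exp (-(w * s₂)) *
          (1 + θ * (1 - Real.exp (-(w * s₁))) * (1 - Real.exp (-(w * s₂))))) *
          gammaFrailtyDensity γ w
      = ∫ w in Set.Ioi (0 : ℝ),
          ((1 + θ) * (Real.exp (-(w * (s₁ + s₂))) * gammaFrailtyDensity γ w)
          - θ * (Real.exp (-(w * (2 * s₁ + s₂))) * gammaFrailtyDensity γ w)
          - θ * (Real.exp (-(w * (s₁ + 2 * s₂))) * gammaFrailtyDensity γ w)
          + θ * (Real.exp (-(w * (2 * (s₁ + s₂)))) * gammaFrailtyDensity γ w)) := by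
    refine setIntegral_congr_fun measurableSet_Ioi (fun w hw => ?_)
    have e1 : Real.exp (-(w * (s₁ + s₂))) = Real.exp (-(w * s₁)) * Real.exp (-(w * s₂)) := by
      rw [← Real.exp_add]; congr 1; ring
    have e2 : Real.exp (-(w * (2 * s₁ + s₂)))
        = Real.exp (-(w * s₁)) * Real.exp (-(w * s₁)) * Real.exp (-(w * s₂)) := by
      rw [← Real.exp_add, ← Real.exp_add]; congr 1; ring
    have e3 : Real.exp (-(w * (s₁ + 2 * s₂)))
        = Real.exp (-(w * s₁)) * Real.exp (-(w * s₂)) * Real.exp (-(w * s₂)) := by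
      rw [← Real.exp_add, ← Real.exp_add]; congr 1; ring
    have e4 : Real.exp (-(w * (2 * (s₁ + s₂))))
        = Real.exp (-(w * s₁)) * Real.exp (-(w * s₁)) * Real.exp (-(w * s₂))
            * Real.exp (-(w * s₂)) := by
      rw [← Real.exp_add, ← Real.exp_add, ← Real.exp_add]; congr 1; ring
    rw [e1, e2, e3, e4]; ring
  have i1 := aux_integrable hγ (s := s₁ + s₂) (by linarith)
  have i2 := aux_integrable hγ (s := 2 * s₁ + s₂) (by linarith)
  have i3 := aux_integrable hγ (s := s₁ + 2 * s₂) (by linarith)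
  have i4 := aux_integrable hγ (s := 2 * (s₁ + s₂)) (by linarith)
  have j1 : IntegrableOn (fun w : ℝ =>
      (1 + θ) * (Real.exp (-(w * (s₁ + s₂))) * gammaFrailtyDensity γ w)
      - θ * (Real.exp (-(w * (2 * s₁ + s₂))) * gammaFrailtyDensity γ w)) (Set.Ioi 0) :=
    (i1.const_mul _).sub (i2.const_mul _)
  have j2 : IntegrableOn (fun w : ℝ =>
      (1 + θ) * (Real.exp (-(w * (s₁ + s₂))) * gammaFrailtyDensity γ w)
      - θ * (Real.exp (-(w * (2 * s₁ + s₂))) * gammaFrailtyDensity γ w)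
      - θ * (Real.exp (-(w * (s₁ + 2 * s₂))) * gammaFrailtyDensity γ w)) (Set.Ioi 0) :=
    j1.sub (i3.const_mul _)
  rw [key,
    integral_add j2 (i4.const_mul _),
    integral_sub j1 (i3.const_mul _),
    integral_sub (i1.const_mul _) (i2.const_mul _),
    integral_const_mul, integral_const_mul, integral_const_mul, integral_const_mul,
    aux_laplace hγ (by linarith : (0:ℝ) ≤ s₁ + s₂),
    aux_laplace hγ (by linarith : (0:ℝ) ≤ 2 * s₁ + s₂),
    aux_laplace hγ (by linarith : (0:ℝ) ≤ s₁ + 2 * s₂),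
    aux_laplace hγ (by linarith : (0:ℝ) ≤ 2 * (s₁ + s₂))]
  have : 1 + γ * (2 * (s₁ + s₂)) = 1 + 2 * γ * (s₁ + s₂) := by ring
  rw [this]
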